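/- arXiv:2602.17894 — 2 statements merged into one kernel-verified Lean document; each statement's English description precedes it below -/
import Mathlib

section
/- (Risk bound for the post-stratified estimator of the population mean.) Consider the multi-source sampling model with a Markov kernel κ satisfying |μ_z| ≤ R and ∫ (y − μ_z)² d(κ z) ≤ σ² for every z ∈ Fin K, and a sampling plan n with total size N = ∑_m n_m ≥ 1. The post-stratified estimator θ̂_PS(D) = ∑_z q_T(z)·Ȳ_z satisfies E_D[(θ̂_PS(D) − ∑_z q_T(z) μ_z)²] ≤ ∑_z q_T(z)²·( σ²·E[1{n_z > 0}/n_z] + R²·P(n_z = 0) ) + ∑_{z ≠ z'} q_T(z) q_T(z')·R²·P(n_z = 0 and n_{z'} = 0). -/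
open MeasureTheory ProbabilityTheory

/-- The discrete measure on `Fin K` associated with a probability vector `w`. -/
noncomputable def discMeasure {K : ℕ} (w : Fin K → ℝ) : Measure (Fin K) :=
  ∑ z : Fin K, ENNReal.ofReal (w z) • Measure.dirac z

/-- The joint law of the dataset in the multi-source sampling model: observation `i`
is drawn independently, with group `Z ~ q_{src i}` and response `Y | Z = z ~ κ z`. -/
noncomputable def jointLaw {K M N : ℕ} (qsrc : Fin M → Fin K → ℝ)
    (κ : Kernel (Fin K) ℝ) (src : Fin N → Fin M) :
    Measure (Fin N → Fin K × ℝ) :=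
  Measure.pi fun i =>
    (discMeasure (qsrc (src i))).bind fun z => (κ z).map fun y => (z, y)

/-- The observed number of data points from group `z`. -/
def nObs {K N : ℕ} (z : Fin K) (D : Fin N → Fin K × ℝ) : ℕ :=
  (Finset.univ.filter fun i => (D i).1 = z).card

/-- The observed group-conditional mean (`0` if group `z` was not observed). -/
noncomputable def groupMean {K N : ℕ} (z : Fin K) (D : Fin N → Fin K × ℝ) : ℝ :=
  if nObs z D = 0 then 0
  else (∑ i ∈ Finset.univ.filter fun i => (D i).1 = z, (D i).2) / (nObs z D : ℝ)

open scoped ENNReal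

namespace PSaux
variable {N : ℕ}

theorem integrable_pi_family (μs : Fin N → Measure ℝ) [h : ∀ i, SigmaFinite (μs i)]
    (f : Fin N → ℝ → ℝ) (hf : ∀ i, Integrable (f i) (μs i)) :
    Integrable (fun y : Fin N → ℝ => ∏ i, f i (y i)) (Measure.pi μs) :=
  Integrable.fintype_prod_dep (E := fun _ => ℝ) (f := f) (μ := μs) hf

theorem integral_pi_family (μs : Fin N → Measure ℝ) [h : ∀ i, SigmaFinite (μs i)]
    (f : Fin N → ℝ → ℝ) :
    ∫ y, ∏ i, f i (y i) ∂(Measure.pi μs) = ∏ i, ∫ t, f i t ∂(μs i) :=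
  integral_fintype_prod_eq_prod (E := fun _ => ℝ) f (μ := μs)

variable (μs : Fin N → Measure ℝ) [h : ∀ i, IsProbabilityMeasure (μs i)]

theorem prod_single (i : Fin N) (f : ℝ → ℝ) (y : Fin N → ℝ) :
    f (y i) = ∏ k, (if k = i then f else fun _ => (1:ℝ)) (y k) := by
  rw [← Finset.prod_subset (Finset.subset_univ ({i} : Finset (Fin N)))
    (fun k _ hk => by simp at hk; simp [hk])]
  simp

theorem prod_pair' (i j : Fin N) (hij : i ≠ j) (f g : ℝ → ℝ) (y : Fin N → ℝ) :
    f (y i) * g (y j)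
      = ∏ k, (if k = i then f else if k = j then g else fun _ => (1:ℝ)) (y k) := by
  rw [← Finset.prod_subset (Finset.subset_univ ({i, j} : Finset (Fin N)))
    (fun k _ hk => by simp at hk; simp [hk.1, hk.2])]
  rw [Finset.prod_pair hij]
  simp [hij.symm]

theorem integrable_eval (i : Fin N) (f : ℝ → ℝ) (hf : Integrable f (μs i)) :
    Integrable (fun y : Fin N → ℝ => f (y i)) (Measure.pi μs) := by
  simp_rw [prod_single i f]
  exact integrable_pi_family μs _ (fun k => by
    by_cases hk : k = i <;> simp [hk, hf, integrable_const])

theorem integral_eval (i : Fin N) (f : ℝ → ℝ) :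
    ∫ y, f (y i) ∂(Measure.pi μs) = ∫ t, f t ∂(μs i) := by
  simp_rw [prod_single i f]
  rw [integral_pi_family]
  rw [← Finset.prod_subset (Finset.subset_univ ({i} : Finset (Fin N)))
    (fun k _ hk => by simp at hk; simp [hk])]
  simp

theorem integrable_eval_mul (i j : Fin N) (hij : i ≠ j) (f g : ℝ → ℝ)
    (hf : Integrable f (μs i)) (hg : Integrable g (μs j)) :
    Integrable (fun y : Fin N → ℝ => f (y i) * g (y j)) (Measure.pi μs) := by
  simp_rw [prod_pair' i j hij f g]
  exact integrable_pi_family μs _ (fun k => by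
    by_cases hk : k = i
    · simp [hk, hij, hf]
    · by_cases hk' : k = j <;> simp [hk, hk', hij.symm, hg, integrable_const])

theorem integral_eval_mul (i j : Fin N) (hij : i ≠ j) (f g : ℝ → ℝ) :
    ∫ y, f (y i) * g (y j) ∂(Measure.pi μs)
      = (∫ t, f t ∂(μs i)) * ∫ t, g t ∂(μs j) := by
  simp_rw [prod_pair' i j hij f g]
  rw [integral_pi_family]
  rw [← Finset.prod_subset (Finset.subset_univ ({i, j} : Finset (Fin N)))
    (fun k _ hk => by simp at hk; simp [hk.1, hk.2])]
  rw [Finset.prod_pair hij]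
  simp [hij.symm]


set_option linter.unusedSectionVars false

variable {K : ℕ}

def B (ζ : Fin N → Fin K) (z : Fin K) : Finset (Fin N) := Finset.univ.filter fun i => ζ i = z
noncomputable def mu (κ : Kernel (Fin K) ℝ) (z : Fin K) : ℝ := ∫ y, y ∂(κ z)
noncomputable def af (κ : Kernel (Fin K) ℝ) (ζ : Fin N → Fin K) (z : Fin K)
    (y : Fin N → ℝ) : ℝ :=
  (if (B ζ z).card = 0 then 0 else (∑ i ∈ B ζ z, y i) / ((B ζ z).card : ℝ)) - mu κ z

variable (κ : Kernel (Fin K) ℝ) [IsMarkovKernel κ] (ζ : Fin N → Fin K)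

theorem zeta_eq_of_mem {z : Fin K} {i : Fin N} (hi : i ∈ B ζ z) : ζ i = z := by
  simpa [B] using hi

theorem af_eq {z : Fin K} (hm : (B ζ z).card ≠ 0) (y : Fin N → ℝ) :
    af κ ζ z y = ∑ i ∈ B ζ z, (y i - mu κ z) / ((B ζ z).card : ℝ) := by
  have hmr : ((B ζ z).card : ℝ) ≠ 0 := Nat.cast_ne_zero.2 hm
  rw [af, if_neg hm, ← Finset.sum_div, Finset.sum_sub_distrib, Finset.sum_const,
    nsmul_eq_mul, sub_div, mul_div_assoc]
  field_simp

theorem af_const {z : Fin K} (hm : (B ζ z).card = 0) : af κ ζ z = fun _ => - mu κ z := by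
  funext y; rw [af, if_pos hm, zero_sub]

theorem af_eq_fun {z : Fin K} (hm : (B ζ z).card ≠ 0) :
    af κ ζ z = fun y => ∑ i ∈ B ζ z, (fun t => (t - mu κ z) / ((B ζ z).card : ℝ)) (y i) :=
  funext (af_eq κ ζ hm)

theorem int_af (h1 : ∀ z, Integrable (fun t => t) (κ z)) (z : Fin K) :
    Integrable (af κ ζ z) (Measure.pi fun i => κ (ζ i)) := by
  by_cases hm : (B ζ z).card = 0
  · rw [af_const κ ζ hm]; exact integrable_const _
  · rw [af_eq_fun κ ζ hm]
    exact integrable_finset_sum _ (fun i hi =>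
      integrable_eval (fun i => κ (ζ i)) i _ (by
        show Integrable (fun t => (t - mu κ z) / ((B ζ z).card : ℝ)) (κ (ζ i))
        rw [zeta_eq_of_mem ζ hi]
        exact ((h1 z).sub (integrable_const _)).div_const _))

theorem integral_centered (h1 : ∀ z, Integrable (fun t => t) (κ z)) (z : Fin K) (c : ℝ) :
    ∫ t, (t - mu κ z) / c ∂(κ z) = 0 := by
  rw [integral_div, integral_sub (h1 z) (integrable_const _), integral_const]
  simp [mu]

theorem integral_af (h1 : ∀ z, Integrable (fun t => t) (κ z)) (z : Fin K) :
    ∫ y, af κ ζ z y ∂(Measure.pi fun i => κ (ζ i)) = if (B ζ z).card = 0 then - mu κ z else 0 := by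
  by_cases hm : (B ζ z).card = 0
  · rw [if_pos hm, af_const κ ζ hm]; simp
  · rw [if_neg hm, af_eq_fun κ ζ hm]
    beta_reduce
    rw [integral_finset_sum (f := fun i (y : Fin N → ℝ) => (y i - mu κ z) / ((B ζ z).card : ℝ)) _ (fun i hi =>
      integrable_eval (fun i => κ (ζ i)) i _ (by
        show Integrable (fun t => (t - mu κ z) / ((B ζ z).card : ℝ)) (κ (ζ i))
        rw [zeta_eq_of_mem ζ hi]
        exact ((h1 z).sub (integrable_const _)).div_const _))]
    refine Finset.sum_eq_zero fun i hi => ?_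
    have hz := zeta_eq_of_mem ζ hi
    rw [integral_eval (fun i => κ (ζ i)) i (fun t => (t - mu κ z) / ((B ζ z).card : ℝ))]
    beta_reduce
    rw [hz, integral_centered κ h1]


noncomputable def Vz (κ : Kernel (Fin K) ℝ) (z : Fin K) : ℝ := ∫ t, (t - mu κ z) ^ 2 ∂(κ z)

theorem int_term (h1 : ∀ z, Integrable (fun t => t) (κ z))
    (h2 : ∀ z, Integrable (fun t => (t - mu κ z) ^ 2) (κ z))
    {z z' : Fin K} {i j : Fin N} (hi : i ∈ B ζ z) (hj : j ∈ B ζ z') (c c' : ℝ) :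
    Integrable (fun y : Fin N → ℝ => ((y i - mu κ z) / c) * ((y j - mu κ z') / c'))
      (Measure.pi fun i => κ (ζ i)) := by
  by_cases hij : i = j
  · subst hij
    have hz : z = z' := (zeta_eq_of_mem ζ hi).symm.trans (zeta_eq_of_mem ζ hj)
    subst hz
    have heq : (fun y : Fin N → ℝ => ((y i - mu κ z) / c) * ((y i - mu κ z) / c'))
        = fun y => (fun t => (t - mu κ z) ^ 2 / (c * c')) (y i) := by
      funext y; show _ = (y i - mu κ z) ^ 2 / (c * c'); ring
    rw [heq]
    refine integrable_eval (fun i => κ (ζ i)) i (fun t => (t - mu κ z) ^ 2 / (c * c')) ?_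
    show Integrable (fun t => (t - mu κ z) ^ 2 / (c * c')) (κ (ζ i))
    rw [zeta_eq_of_mem ζ hi]
    exact (h2 z).div_const _
  · refine integrable_eval_mul (fun i => κ (ζ i)) i j hij (fun t => (t - mu κ z) / c)
      (fun t => (t - mu κ z') / c') ?_ ?_
    · show Integrable (fun t => (t - mu κ z) / c) (κ (ζ i))
      rw [zeta_eq_of_mem ζ hi]
      exact ((h1 z).sub (integrable_const _)).div_const _
    · show Integrable (fun t => (t - mu κ z') / c') (κ (ζ j))
      rw [zeta_eq_of_mem ζ hj]
      exact ((h1 z').sub (integrable_const _)).div_const _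

theorem int_af_mul (h1 : ∀ z, Integrable (fun t => t) (κ z))
    (h2 : ∀ z, Integrable (fun t => (t - mu κ z) ^ 2) (κ z)) (z z' : Fin K) :
    Integrable (fun y => af κ ζ z y * af κ ζ z' y) (Measure.pi fun i => κ (ζ i)) := by
  by_cases hm : (B ζ z).card = 0
  · have heq : (fun y : Fin N → ℝ => af κ ζ z y * af κ ζ z' y)
        = fun y => (- mu κ z) * af κ ζ z' y := by
      funext y; rw [af_const κ ζ hm]
    rw [heq]; exact (int_af κ ζ h1 z').const_mul _
  by_cases hm' : (B ζ z').card = 0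
  · have heq : (fun y : Fin N → ℝ => af κ ζ z y * af κ ζ z' y)
        = fun y => af κ ζ z y * (- mu κ z') := by
      funext y; rw [af_const κ ζ hm']
    rw [heq]; exact (int_af κ ζ h1 z).mul_const _
  · rw [af_eq_fun κ ζ hm, af_eq_fun κ ζ hm']
    beta_reduce
    simp_rw [Finset.sum_mul_sum]
    exact integrable_finset_sum _ (fun i hi => integrable_finset_sum _ (fun j hj =>
      int_term κ ζ h1 h2 hi hj _ _))

theorem integral_af_mul_offdiag (h1 : ∀ z, Integrable (fun t => t) (κ z))
    (h2 : ∀ z, Integrable (fun t => (t - mu κ z) ^ 2) (κ z))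
    (z z' : Fin K) (hzz' : z ≠ z') :
    ∫ y, af κ ζ z y * af κ ζ z' y ∂(Measure.pi fun i => κ (ζ i))
      = if (B ζ z).card = 0 ∧ (B ζ z').card = 0 then mu κ z * mu κ z' else 0 := by
  by_cases hm : (B ζ z).card = 0 <;> by_cases hm' : (B ζ z').card = 0
  · have heq : (fun y : Fin N → ℝ => af κ ζ z y * af κ ζ z' y)
        = fun _ => mu κ z * mu κ z' := by
      funext y; rw [af_const κ ζ hm, af_const κ ζ hm']; ring
    rw [show (∫ y, af κ ζ z y * af κ ζ z' y ∂(Measure.pi fun i => κ (ζ i)))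
        = ∫ y, (fun _ : Fin N → ℝ => mu κ z * mu κ z') y ∂(Measure.pi fun i => κ (ζ i)) from by
      rw [← heq]]
    rw [integral_const]; simp [hm, hm']
  · have heq : ∀ y : Fin N → ℝ, af κ ζ z y * af κ ζ z' y = (- mu κ z) * af κ ζ z' y := by
      intro y; rw [af_const κ ζ hm]
    simp_rw [heq]
    rw [integral_const_mul, integral_af κ ζ h1 z', if_neg hm']
    simp [hm, hm']
  · have heq : ∀ y : Fin N → ℝ, af κ ζ z y * af κ ζ z' y = af κ ζ z y * (- mu κ z') := by
      intro y; rw [af_const κ ζ hm']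
    simp_rw [heq]
    rw [integral_mul_const, integral_af κ ζ h1 z, if_neg hm]
    simp [hm, hm']
  · rw [if_neg (by tauto), af_eq_fun κ ζ hm, af_eq_fun κ ζ hm']
    beta_reduce
    simp_rw [Finset.sum_mul_sum]
    rw [integral_finset_sum _ (fun i hi => integrable_finset_sum _ (fun j hj =>
      int_term κ ζ h1 h2 hi hj _ _))]
    refine Finset.sum_eq_zero fun i hi => ?_
    rw [integral_finset_sum _ (fun j hj => int_term κ ζ h1 h2 hi hj _ _)]
    refine Finset.sum_eq_zero fun j hj => ?_
    have hij : i ≠ j := fun h => hzz' (((zeta_eq_of_mem ζ hi).symm.trans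
      (h ▸ zeta_eq_of_mem ζ hj)))
    rw [integral_eval_mul (fun i => κ (ζ i)) i j hij
      (fun t => (t - mu κ z) / ((B ζ z).card : ℝ))
      (fun t => (t - mu κ z') / ((B ζ z').card : ℝ))]
    beta_reduce
    rw [zeta_eq_of_mem ζ hi, integral_centered κ h1, zero_mul]

theorem integral_af_sq (h1 : ∀ z, Integrable (fun t => t) (κ z))
    (h2 : ∀ z, Integrable (fun t => (t - mu κ z) ^ 2) (κ z)) (z : Fin K) :
    ∫ y, af κ ζ z y * af κ ζ z y ∂(Measure.pi fun i => κ (ζ i))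
      = if (B ζ z).card = 0 then mu κ z ^ 2 else Vz κ z / ((B ζ z).card : ℝ) := by
  by_cases hm : (B ζ z).card = 0
  · have heq : (fun y : Fin N → ℝ => af κ ζ z y * af κ ζ z y)
        = fun _ => mu κ z ^ 2 := by
      funext y; rw [af_const κ ζ hm]; ring
    rw [show (∫ y, af κ ζ z y * af κ ζ z y ∂(Measure.pi fun i => κ (ζ i)))
        = ∫ y, (fun _ : Fin N → ℝ => mu κ z ^ 2) y ∂(Measure.pi fun i => κ (ζ i)) from by
      rw [← heq]]
    rw [integral_const]; simp [hm]
  · rw [if_neg hm, af_eq_fun κ ζ hm]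
    beta_reduce
    simp_rw [Finset.sum_mul_sum]
    rw [integral_finset_sum _ (fun i hi => integrable_finset_sum _ (fun j hj =>
      int_term κ ζ h1 h2 hi hj _ _))]
    have hterm : ∀ i ∈ B ζ z, ∀ j ∈ B ζ z,
        (∫ y, ((y i - mu κ z) / ((B ζ z).card : ℝ)) * ((y j - mu κ z) / ((B ζ z).card : ℝ))
          ∂(Measure.pi fun i => κ (ζ i)))
        = if i = j then Vz κ z / (((B ζ z).card : ℝ) * ((B ζ z).card : ℝ)) else 0 := by
      intro i hi j hj
      by_cases hij : i = j
      · subst hij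
        rw [if_pos rfl]
        have heq : (fun y : Fin N → ℝ =>
            ((y i - mu κ z) / ((B ζ z).card : ℝ)) * ((y i - mu κ z) / ((B ζ z).card : ℝ)))
            = fun y => (fun t => (t - mu κ z) ^ 2 / (((B ζ z).card : ℝ) * ((B ζ z).card : ℝ))) (y i) := by
          funext y
          show _ = (y i - mu κ z) ^ 2 / (((B ζ z).card : ℝ) * ((B ζ z).card : ℝ))
          ring
        rw [show (∫ y, ((y i - mu κ z) / ((B ζ z).card : ℝ)) * ((y i - mu κ z) / ((B ζ z).card : ℝ))
            ∂(Measure.pi fun i => κ (ζ i)))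
            = ∫ y, (fun t => (t - mu κ z) ^ 2 / (((B ζ z).card : ℝ) * ((B ζ z).card : ℝ))) (y i)
              ∂(Measure.pi fun i => κ (ζ i)) from by rw [← heq]]
        rw [integral_eval (fun i => κ (ζ i)) i
          (fun t => (t - mu κ z) ^ 2 / (((B ζ z).card : ℝ) * ((B ζ z).card : ℝ)))]
        beta_reduce
        rw [zeta_eq_of_mem ζ hi, integral_div]
        rfl
      · rw [if_neg hij]
        rw [integral_eval_mul (fun i => κ (ζ i)) i j hij
          (fun t => (t - mu κ z) / ((B ζ z).card : ℝ))
          (fun t => (t - mu κ z) / ((B ζ z).card : ℝ))]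
        beta_reduce
        rw [zeta_eq_of_mem ζ hi, integral_centered κ h1, zero_mul]
    calc ∑ i ∈ B ζ z, ∫ y, ∑ j ∈ B ζ z,
            ((y i - mu κ z) / ((B ζ z).card : ℝ)) * ((y j - mu κ z) / ((B ζ z).card : ℝ))
          ∂(Measure.pi fun i => κ (ζ i))
        = ∑ i ∈ B ζ z, ∑ j ∈ B ζ z, if i = j then
            Vz κ z / (((B ζ z).card : ℝ) * ((B ζ z).card : ℝ)) else 0 := by
          refine Finset.sum_congr rfl fun i hi => ?_
          rw [integral_finset_sum _ (fun j hj => int_term κ ζ h1 h2 hi hj _ _)]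
          exact Finset.sum_congr rfl fun j hj => hterm i hi j hj
      _ = ∑ i ∈ B ζ z, Vz κ z / (((B ζ z).card : ℝ) * ((B ζ z).card : ℝ)) := by
          refine Finset.sum_congr rfl fun i hi => ?_
          rw [Finset.sum_ite_eq (B ζ z) i
            (fun _ => Vz κ z / (((B ζ z).card : ℝ) * ((B ζ z).card : ℝ))), if_pos hi]
      _ = Vz κ z / ((B ζ z).card : ℝ) := by
          rw [Finset.sum_const, nsmul_eq_mul]
          have hmr : ((B ζ z).card : ℝ) ≠ 0 := Nat.cast_ne_zero.2 hm
          field_simp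


theorem perZeta_bound (σ R : ℝ) (qT : Fin K → ℝ) (hqT : ∀ z, 0 ≤ qT z)
    (h1 : ∀ z, Integrable (fun t => t) (κ z))
    (h2 : ∀ z, Integrable (fun t => (t - mu κ z) ^ 2) (κ z))
    (hR : 0 ≤ R) (hmean : ∀ z, |mu κ z| ≤ R) (hvar : ∀ z, Vz κ z ≤ σ ^ 2) :
    ∫ y, (∑ z, qT z * af κ ζ z y) ^ 2 ∂(Measure.pi fun i => κ (ζ i)) ≤
      (∑ z, qT z ^ 2 * (σ ^ 2 * (if 0 < (B ζ z).card then 1 / ((B ζ z).card : ℝ) else 0)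
        + R ^ 2 * (if (B ζ z).card = 0 then 1 else 0)))
      + ∑ zz ∈ Finset.univ.offDiag, qT zz.1 * qT zz.2 * R ^ 2 *
          (if (B ζ zz.1).card = 0 ∧ (B ζ zz.2).card = 0 then 1 else 0) := by
  have hexp : (fun y : Fin N → ℝ => (∑ z, qT z * af κ ζ z y) ^ 2)
      = fun y => ∑ z : Fin K, ∑ z' : Fin K, qT z * qT z' * (af κ ζ z y * af κ ζ z' y) := by
    funext y
    rw [sq, Finset.sum_mul_sum]
    exact Finset.sum_congr rfl fun z _ => Finset.sum_congr rfl fun z' _ => by ring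
  calc ∫ y, (∑ z, qT z * af κ ζ z y) ^ 2 ∂(Measure.pi fun i => κ (ζ i))
      = ∫ y, ∑ z : Fin K, ∑ z' : Fin K, qT z * qT z' * (af κ ζ z y * af κ ζ z' y)
          ∂(Measure.pi fun i => κ (ζ i)) := by rw [hexp]
    _ = ∑ z : Fin K, ∑ z' : Fin K, qT z * qT z' *
          ∫ y, af κ ζ z y * af κ ζ z' y ∂(Measure.pi fun i => κ (ζ i)) := by
        rw [integral_finset_sum _ (fun z _ => integrable_finset_sum _
          (fun z' _ => ((int_af_mul κ ζ h1 h2 z z').const_mul _)))]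
        refine Finset.sum_congr rfl fun z _ => ?_
        rw [integral_finset_sum _ (fun z' _ => ((int_af_mul κ ζ h1 h2 z z').const_mul _))]
        exact Finset.sum_congr rfl fun z' _ => integral_const_mul _ _
    _ = ∑ zz ∈ Finset.univ ×ˢ Finset.univ, qT zz.1 * qT zz.2 *
          ∫ y, af κ ζ zz.1 y * af κ ζ zz.2 y ∂(Measure.pi fun i => κ (ζ i)) := by
        rw [Finset.sum_product]
    _ = (∑ zz ∈ Finset.univ.diag, qT zz.1 * qT zz.2 *
          ∫ y, af κ ζ zz.1 y * af κ ζ zz.2 y ∂(Measure.pi fun i => κ (ζ i)))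
        + ∑ zz ∈ Finset.univ.offDiag, qT zz.1 * qT zz.2 *
          ∫ y, af κ ζ zz.1 y * af κ ζ zz.2 y ∂(Measure.pi fun i => κ (ζ i)) := by
        rw [← Finset.diag_union_offDiag (Finset.univ : Finset (Fin K)),
          Finset.sum_union (Finset.disjoint_diag_offDiag _)]
    _ ≤ _ := by
        refine add_le_add ?_ ?_
        · rw [Finset.sum_diag]
          refine Finset.sum_le_sum fun z _ => ?_
          rw [integral_af_sq κ ζ h1 h2 z]
          have h0 : (0:ℝ) ≤ qT z * qT z := mul_nonneg (hqT z) (hqT z)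
          by_cases hm : (B ζ z).card = 0
          · rw [if_pos hm, if_pos hm, if_neg (by omega : ¬ 0 < (B ζ z).card)]
            have hmu : mu κ z ^ 2 ≤ R ^ 2 := by
              have := pow_le_pow_left₀ (abs_nonneg _) (hmean z) 2
              rwa [sq_abs] at this
            calc qT z * qT z * mu κ z ^ 2 ≤ qT z * qT z * R ^ 2 :=
                mul_le_mul_of_nonneg_left hmu h0
              _ = qT z ^ 2 * (σ ^ 2 * 0 + R ^ 2 * 1) := by ring
          · rw [if_neg hm, if_neg hm, if_pos (by omega : 0 < (B ζ z).card)]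
            have hmpos : (0:ℝ) < ((B ζ z).card : ℝ) := by
              exact_mod_cast Nat.pos_of_ne_zero hm
            have hdiv : Vz κ z / ((B ζ z).card : ℝ) ≤ σ ^ 2 / ((B ζ z).card : ℝ) := by
              gcongr
              exact hvar z
            calc qT z * qT z * (Vz κ z / ((B ζ z).card : ℝ))
                ≤ qT z * qT z * (σ ^ 2 / ((B ζ z).card : ℝ)) :=
                mul_le_mul_of_nonneg_left hdiv h0
              _ = qT z ^ 2 * (σ ^ 2 * (1 / ((B ζ z).card : ℝ)) + R ^ 2 * 0) := by ring
        · refine Finset.sum_le_sum fun zz hzz => ?_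
          have hne : zz.1 ≠ zz.2 := (Finset.mem_offDiag.1 hzz).2.2
          rw [integral_af_mul_offdiag κ ζ h1 h2 zz.1 zz.2 hne]
          by_cases hb : (B ζ zz.1).card = 0 ∧ (B ζ zz.2).card = 0
          · rw [if_pos hb, if_pos hb]
            have hmu : mu κ zz.1 * mu κ zz.2 ≤ R ^ 2 := by
              calc mu κ zz.1 * mu κ zz.2 ≤ |mu κ zz.1 * mu κ zz.2| := le_abs_self _
                _ = |mu κ zz.1| * |mu κ zz.2| := abs_mul _ _
                _ ≤ R * R := mul_le_mul (hmean _) (hmean _) (abs_nonneg _) hR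
                _ = R ^ 2 := (sq R).symm
            calc qT zz.1 * qT zz.2 * (mu κ zz.1 * mu κ zz.2)
                ≤ qT zz.1 * qT zz.2 * R ^ 2 :=
                mul_le_mul_of_nonneg_left hmu (mul_nonneg (hqT _) (hqT _))
              _ = qT zz.1 * qT zz.2 * R ^ 2 * 1 := by ring
          · rw [if_neg hb, if_neg hb]
            simp


def emb (ζ : Fin N → Fin K) : (Fin N → ℝ) → (Fin N → Fin K × ℝ) := fun y i => (ζ i, y i)

theorem measurable_emb (ζ : Fin N → Fin K) : Measurable (emb ζ) :=
  measurable_pi_lambda _ fun i => measurable_const.prodMk (measurable_pi_apply i)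

noncomputable def nu (κ : Kernel (Fin K) ℝ) (ζ : Fin N → Fin K) :
    Measure (Fin N → Fin K × ℝ) :=
  Measure.map (emb ζ) (Measure.pi fun i => κ (ζ i))

instance (κ : Kernel (Fin K) ℝ) [IsMarkovKernel κ] (ζ : Fin N → Fin K) :
    IsProbabilityMeasure (nu κ ζ) :=
  Measure.isProbabilityMeasure_map (measurable_emb ζ).aemeasurable

theorem nObs_emb (ζ : Fin N → Fin K) (z : Fin K) (y : Fin N → ℝ) :
    nObs z (emb ζ y) = (B ζ z).card := rfl

theorem groupMean_emb (ζ : Fin N → Fin K) (z : Fin K) (y : Fin N → ℝ) :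
    groupMean z (emb ζ y) = af κ ζ z y + mu κ z := by
  show (if (B ζ z).card = 0 then 0
    else (∑ i ∈ B ζ z, y i) / ((B ζ z).card : ℝ)) = _
  rw [af, sub_add_cancel]

theorem bind_apply' (w : Fin K → ℝ) {s : Set (Fin K × ℝ)} (hs : MeasurableSet s) :
    ((discMeasure w).bind fun z => (κ z).map fun y => (z, y)) s
      = ∑ z, ENNReal.ofReal (w z) * (κ z) {t | (z, t) ∈ s} := by
  rw [Measure.bind_apply hs (Measurable.of_discrete (f := fun z => (κ z).map fun y => (z, y))).aemeasurable]
  rw [discMeasure, lintegral_finset_sum_measure]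
  refine Finset.sum_congr rfl fun z _ => ?_
  rw [lintegral_smul_measure, lintegral_dirac, Measure.map_apply measurable_prodMk_left hs]
  rfl

theorem bind_prob (w : Fin K → ℝ) (hw : ∀ z, 0 ≤ w z) (hw1 : ∑ z, w z = 1) :
    IsProbabilityMeasure ((discMeasure w).bind fun z => (κ z).map fun y => (z, y)) := by
  constructor
  rw [bind_apply' κ w MeasurableSet.univ]
  simp only [Set.mem_univ, Set.setOf_true, measure_univ, mul_one]
  rw [← ENNReal.ofReal_sum_of_nonneg (fun z _ => hw z), hw1, ENNReal.ofReal_one]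

theorem jointLaw_eq {M : ℕ} (qsrc : Fin M → Fin K → ℝ)
    (hq : ∀ m, (∀ z, 0 ≤ qsrc m z) ∧ ∑ z, qsrc m z = 1) (src : Fin N → Fin M) :
    jointLaw qsrc κ src
      = ∑ ζ : Fin N → Fin K, (∏ i, ENNReal.ofReal (qsrc (src i) (ζ i))) • nu κ ζ := by
  rw [jointLaw]
  haveI : ∀ i : Fin N, IsProbabilityMeasure
      ((discMeasure (qsrc (src i))).bind fun z => (κ z).map fun y => (z, y)) :=
    fun i => bind_prob κ _ (hq (src i)).1 (hq (src i)).2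
  refine Measure.pi_eq fun s hs => ?_
  rw [Measure.finset_sum_apply]
  have hnu : ∀ ζ : Fin N → Fin K, nu κ ζ (Set.pi Set.univ s)
      = ∏ i, (κ (ζ i)) {t | (ζ i, t) ∈ s i} := by
    intro ζ
    rw [nu, Measure.map_apply (measurable_emb ζ) (MeasurableSet.pi Set.countable_univ
      (fun i _ => hs i))]
    have : emb ζ ⁻¹' Set.pi Set.univ s = Set.pi Set.univ fun i => {t | (ζ i, t) ∈ s i} := by
      ext y; simp [emb, Set.mem_pi]
    rw [this, Measure.pi_pi]
  calc ∑ ζ : Fin N → Fin K, ((∏ i, ENNReal.ofReal (qsrc (src i) (ζ i))) • nu κ ζ)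
        (Set.pi Set.univ s)
      = ∑ ζ : Fin N → Fin K, ∏ i,
          ENNReal.ofReal (qsrc (src i) (ζ i)) * (κ (ζ i)) {t | (ζ i, t) ∈ s i} := by
        refine Finset.sum_congr rfl fun ζ _ => ?_
        rw [Measure.smul_apply, smul_eq_mul, hnu ζ, Finset.prod_mul_distrib]
    _ = ∏ i, ∑ z, ENNReal.ofReal (qsrc (src i) z) * (κ z) {t | (z, t) ∈ s i} := by
        rw [Finset.prod_univ_sum]
        rw [← Fintype.piFinset_univ]
    _ = ∏ i, ((discMeasure (qsrc (src i))).bind fun z => (κ z).map fun y => (z, y)) (s i) := by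
        exact Finset.prod_congr rfl fun i _ => (bind_apply' κ _ (hs i)).symm

theorem measurable_nObs (z : Fin K) :
    Measurable fun D : Fin N → Fin K × ℝ => nObs z D := by
  have heq : (fun D : Fin N → Fin K × ℝ => nObs z D)
      = fun D => ∑ i : Fin N, if (D i).1 = z then 1 else 0 := by
    funext D; rw [nObs, Finset.card_filter]
  rw [heq]
  refine Finset.measurable_sum _ fun i _ => Measurable.ite ?_ measurable_const measurable_const
  exact ((measurable_pi_apply i).fst) (measurableSet_singleton z)

theorem measurable_groupMean (z : Fin K) :
    Measurable fun D : Fin N → Fin K × ℝ => groupMean z D := by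
  have heq : (fun D : Fin N → Fin K × ℝ => groupMean z D)
      = fun D => if nObs z D = 0 then 0
          else (∑ i : Fin N, if (D i).1 = z then (D i).2 else 0) / (nObs z D : ℝ) := by
    funext D
    rw [groupMean, Finset.sum_filter]
  rw [heq]
  have hno : MeasurableSet {D : Fin N → Fin K × ℝ | nObs z D = 0} :=
    (measurable_nObs z) (measurableSet_singleton 0)
  refine Measurable.ite hno measurable_const (Measurable.div ?_ ?_)
  · refine Finset.measurable_sum _ fun i _ => Measurable.ite ?_ ?_ measurable_const
    · exact ((measurable_pi_apply i).fst) (measurableSet_singleton z)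
    · exact (measurable_pi_apply i).snd
  · exact Measurable.comp Measurable.of_discrete (measurable_nObs z)


theorem int_sq_sum (qT : Fin K → ℝ)
    (h1 : ∀ z, Integrable (fun t => t) (κ z))
    (h2 : ∀ z, Integrable (fun t => (t - mu κ z) ^ 2) (κ z)) :
    Integrable (fun y => (∑ z, qT z * af κ ζ z y) ^ 2) (Measure.pi fun i => κ (ζ i)) := by
  have hexp : (fun y : Fin N → ℝ => (∑ z, qT z * af κ ζ z y) ^ 2)
      = fun y => ∑ z : Fin K, ∑ z' : Fin K, qT z * qT z' * (af κ ζ z y * af κ ζ z' y) := by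
    funext y
    rw [sq, Finset.sum_mul_sum]
    exact Finset.sum_congr rfl fun z _ => Finset.sum_congr rfl fun z' _ => by ring
  rw [hexp]
  exact integrable_finset_sum _ fun z _ => integrable_finset_sum _ fun z' _ =>
    (int_af_mul κ ζ h1 h2 z z').const_mul _

end PSaux

open PSaux

/-- Risk bound for the post-stratified estimator
`θ̂_PS(D) = ∑_z q_T(z)·Ȳ_z` of the population mean `∑_z q_T(z)·μ_z`. -/
theorem post_stratified_risk_bound
    {K M N : ℕ} (hK : 1 ≤ K) (hM : 1 ≤ M) (σ R : ℝ)
    (qsrc : Fin M → Fin K → ℝ)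
    (hqsrc : ∀ m, (∀ z, 0 ≤ qsrc m z) ∧ ∑ z, qsrc m z = 1)
    (qT : Fin K → ℝ) (hqT : (∀ z, 0 ≤ qT z) ∧ ∑ z, qT z = 1)
    (n : Fin M → ℕ) (hN : N = ∑ m, n m) (hNpos : 1 ≤ N)
    (src : Fin N → Fin M)
    (hsrc : ∀ m, (Finset.univ.filter fun i => src i = m).card = n m)
    (κ : Kernel (Fin K) ℝ) (hκ : IsMarkovKernel κ)
    (hmean_int : ∀ z, Integrable (fun y => y) (κ z))
    (hmean : ∀ z, |∫ y, y ∂(κ z)| ≤ R)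
    (hvar_int : ∀ z, Integrable (fun y => (y - ∫ y', y' ∂(κ z)) ^ 2) (κ z))
    (hvar : ∀ z, ∫ y, (y - ∫ y', y' ∂(κ z)) ^ 2 ∂(κ z) ≤ σ ^ 2) :
    ∫ D, (∑ z, qT z * groupMean z D - ∑ z, qT z * ∫ y, y ∂(κ z)) ^ 2
        ∂(jointLaw qsrc κ src) ≤
      (∑ z, (qT z) ^ 2 *
        (σ ^ 2 * (∫ D, (if 0 < nObs z D then 1 / (nObs z D : ℝ) else 0)
            ∂(jointLaw qsrc κ src))
          + R ^ 2 * (jointLaw qsrc κ src {D | nObs z D = 0}).toReal))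
      + ∑ zz ∈ Finset.univ.offDiag,
          qT zz.1 * qT zz.2 * R ^ 2 *
            (jointLaw qsrc κ src {D | nObs zz.1 D = 0 ∧ nObs zz.2 D = 0}).toReal := by
  classical
  have h1 : ∀ z, Integrable (fun t => t) (κ z) := hmean_int
  have h2 : ∀ z, Integrable (fun t => (t - mu κ z) ^ 2) (κ z) := hvar_int
  have hμR : ∀ z, |mu κ z| ≤ R := hmean
  have hV : ∀ z, Vz κ z ≤ σ ^ 2 := hvar
  have hR : 0 ≤ R := le_trans (abs_nonneg _) (hμR ⟨0, hK⟩)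
  set c : (Fin N → Fin K) → ℝ≥0∞ := fun ζ => ∏ i, ENNReal.ofReal (qsrc (src i) (ζ i)) with hc
  have hcne : ∀ ζ, c ζ ≠ ⊤ := fun ζ =>
    (ENNReal.prod_lt_top fun i _ => ENNReal.ofReal_lt_top).ne
  have hWnn : ∀ ζ, 0 ≤ (c ζ).toReal := fun ζ => ENNReal.toReal_nonneg
  have hA : jointLaw qsrc κ src = ∑ ζ : Fin N → Fin K, c ζ • nu κ ζ :=
    jointLaw_eq κ qsrc hqsrc src
  -- measurability facts
  have hFm : Measurable fun D : Fin N → Fin K × ℝ =>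
      (∑ z, qT z * groupMean z D - ∑ z, qT z * ∫ y, y ∂(κ z)) ^ 2 := by
    have hs : Measurable fun D : Fin N → Fin K × ℝ => ∑ z, qT z * groupMean z D :=
      Finset.measurable_sum _ fun z _ => (measurable_groupMean z).const_mul (qT z)
    exact (hs.sub measurable_const).pow_const 2
  have hGm : ∀ z : Fin K, Measurable fun D : Fin N → Fin K × ℝ =>
      if 0 < nObs z D then 1 / (nObs z D : ℝ) else 0 := by
    intro z
    have hset : MeasurableSet {D : Fin N → Fin K × ℝ | 0 < nObs z D} := by
      have : {D : Fin N → Fin K × ℝ | 0 < nObs z D}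
          = {D : Fin N → Fin K × ℝ | nObs z D = 0}ᶜ := by
        ext D; simp [Nat.pos_iff_ne_zero]
      rw [this]
      exact ((measurable_nObs z) (measurableSet_singleton 0)).compl
    exact Measurable.ite hset
      (measurable_const.div (Measurable.of_discrete.comp (measurable_nObs z)))
      measurable_const
  -- pointwise composition
  have hFemb : ∀ ζ : Fin N → Fin K,
      (fun y : Fin N → ℝ =>
        (∑ z, qT z * groupMean z (emb ζ y) - ∑ z, qT z * ∫ y', y' ∂(κ z)) ^ 2)
      = fun y => (∑ z, qT z * af κ ζ z y) ^ 2 := by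
    intro ζ; funext y
    have hsum : ∑ z, qT z * groupMean z (emb ζ y)
        = (∑ z, qT z * af κ ζ z y) + ∑ z, qT z * ∫ y', y' ∂(κ z) := by
      rw [← Finset.sum_add_distrib]
      exact Finset.sum_congr rfl fun z _ => by rw [groupMean_emb κ ζ z y, mul_add, mu]
    rw [hsum, add_sub_cancel_right]
  -- integrability over nu
  have hFint : ∀ ζ : Fin N → Fin K, Integrable (fun D : Fin N → Fin K × ℝ =>
      (∑ z, qT z * groupMean z D - ∑ z, qT z * ∫ y, y ∂(κ z)) ^ 2) (nu κ ζ) := by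
    intro ζ
    rw [nu]
    refine (integrable_map_measure hFm.aestronglyMeasurable
      (measurable_emb ζ).aemeasurable).2 ?_
    have : ((fun D : Fin N → Fin K × ℝ =>
        (∑ z, qT z * groupMean z D - ∑ z, qT z * ∫ y, y ∂(κ z)) ^ 2) ∘ emb ζ)
        = fun y => (∑ z, qT z * af κ ζ z y) ^ 2 := by
      rw [← hFemb ζ]; rfl
    rw [this]
    exact int_sq_sum κ ζ qT h1 h2
  have hGint : ∀ (z : Fin K) (ζ : Fin N → Fin K),
      Integrable (fun D : Fin N → Fin K × ℝ =>
        if 0 < nObs z D then 1 / (nObs z D : ℝ) else 0) (nu κ ζ) := by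
    intro z ζ
    rw [nu]
    refine (integrable_map_measure (hGm z).aestronglyMeasurable
      (measurable_emb ζ).aemeasurable).2 ?_
    have : ((fun D : Fin N → Fin K × ℝ =>
        if 0 < nObs z D then 1 / (nObs z D : ℝ) else 0) ∘ emb ζ)
        = fun _ : Fin N → ℝ =>
          if 0 < (B ζ z).card then 1 / ((B ζ z).card : ℝ) else 0 := by
      funext y; simp only [Function.comp_apply, nObs_emb]; rfl
    rw [this]
    exact integrable_const _
  -- LHS decomposition
  have hLHS : ∫ D, (∑ z, qT z * groupMean z D - ∑ z, qT z * ∫ y, y ∂(κ z)) ^ 2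
        ∂(jointLaw qsrc κ src)
      = ∑ ζ : Fin N → Fin K, (c ζ).toReal *
          ∫ y, (∑ z, qT z * af κ ζ z y) ^ 2 ∂(Measure.pi fun i => κ (ζ i)) := by
    rw [hA, integral_finset_sum_measure (fun ζ _ => (hFint ζ).smul_measure (hcne ζ))]
    refine Finset.sum_congr rfl fun ζ _ => ?_
    rw [integral_smul_measure, smul_eq_mul]
    congr 1
    rw [nu, integral_map (measurable_emb ζ).aemeasurable hFm.aestronglyMeasurable]
    rw [hFemb ζ]
  -- expected inverse count decomposition
  have hT : ∀ z : Fin K, ∫ D, (if 0 < nObs z D then 1 / (nObs z D : ℝ) else 0)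
        ∂(jointLaw qsrc κ src)
      = ∑ ζ : Fin N → Fin K, (c ζ).toReal *
          (if 0 < (B ζ z).card then 1 / ((B ζ z).card : ℝ) else 0) := by
    intro z
    rw [hA, integral_finset_sum_measure (fun ζ _ => (hGint z ζ).smul_measure (hcne ζ))]
    refine Finset.sum_congr rfl fun ζ _ => ?_
    rw [integral_smul_measure, smul_eq_mul]
    congr 1
    rw [nu, integral_map (measurable_emb ζ).aemeasurable (hGm z).aestronglyMeasurable]
    have : (fun y : Fin N → ℝ =>
        if 0 < nObs z (emb ζ y) then 1 / ((nObs z (emb ζ y)) : ℝ) else 0)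
        = fun _ : Fin N → ℝ =>
          if 0 < (B ζ z).card then 1 / ((B ζ z).card : ℝ) else 0 := by
      funext y; simp only [nObs_emb]; rfl
    rw [this, integral_const]
    simp
  -- single-miss probability decomposition
  have hS : ∀ z : Fin K, MeasurableSet {D : Fin N → Fin K × ℝ | nObs z D = 0} :=
    fun z => (measurable_nObs z) (measurableSet_singleton 0)
  have hnuE : ∀ (z : Fin K) (ζ : Fin N → Fin K),
      nu κ ζ {D | nObs z D = 0} = if (B ζ z).card = 0 then 1 else 0 := by
    intro z ζ
    rw [nu, Measure.map_apply (measurable_emb ζ) (hS z)]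
    by_cases hm : (B ζ z).card = 0
    · rw [if_pos hm]
      have : emb ζ ⁻¹' {D | nObs z D = 0} = Set.univ := by
        ext y; simp [Set.mem_preimage, nObs_emb, hm]
      rw [this]; exact measure_univ
    · rw [if_neg hm]
      have : emb ζ ⁻¹' {D | nObs z D = 0} = ∅ := by
        ext y; simp [Set.mem_preimage, nObs_emb, hm]
      rw [this]; exact measure_empty
  have hE : ∀ z : Fin K, (jointLaw qsrc κ src {D | nObs z D = 0}).toReal
      = ∑ ζ : Fin N → Fin K, (c ζ).toReal * (if (B ζ z).card = 0 then 1 else 0) := by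
    intro z
    rw [hA, Measure.finset_sum_apply]
    rw [ENNReal.toReal_sum (fun ζ _ => by
      rw [Measure.smul_apply, smul_eq_mul]
      exact ENNReal.mul_ne_top (hcne ζ) (measure_ne_top _ _))]
    refine Finset.sum_congr rfl fun ζ _ => ?_
    rw [Measure.smul_apply, smul_eq_mul, ENNReal.toReal_mul, hnuE z ζ]
    congr 1
    split_ifs <;> simp
  -- pair-miss probability decomposition
  have hS2 : ∀ z z' : Fin K,
      MeasurableSet {D : Fin N → Fin K × ℝ | nObs z D = 0 ∧ nObs z' D = 0} :=
    fun z z' => (hS z).inter (hS z')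
  have hnuE2 : ∀ (z z' : Fin K) (ζ : Fin N → Fin K),
      nu κ ζ {D | nObs z D = 0 ∧ nObs z' D = 0}
      = if (B ζ z).card = 0 ∧ (B ζ z').card = 0 then 1 else 0 := by
    intro z z' ζ
    rw [nu, Measure.map_apply (measurable_emb ζ) (hS2 z z')]
    by_cases hm : (B ζ z).card = 0 ∧ (B ζ z').card = 0
    · rw [if_pos hm]
      have : emb ζ ⁻¹' {D | nObs z D = 0 ∧ nObs z' D = 0} = Set.univ := by
        ext y; simp [Set.mem_preimage, nObs_emb, hm.1, hm.2]
      rw [this]; exact measure_univ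
    · rw [if_neg hm]
      have : emb ζ ⁻¹' {D | nObs z D = 0 ∧ nObs z' D = 0} = ∅ := by
        ext y
        simp only [Set.mem_preimage, Set.mem_setOf_eq, nObs_emb, Set.mem_empty_iff_false,
          iff_false]
        exact hm
      rw [this]; exact measure_empty
  have hE2 : ∀ z z' : Fin K,
      (jointLaw qsrc κ src {D | nObs z D = 0 ∧ nObs z' D = 0}).toReal
      = ∑ ζ : Fin N → Fin K, (c ζ).toReal *
          (if (B ζ z).card = 0 ∧ (B ζ z').card = 0 then 1 else 0) := by
    intro z z'
    rw [hA, Measure.finset_sum_apply]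
    rw [ENNReal.toReal_sum (fun ζ _ => by
      rw [Measure.smul_apply, smul_eq_mul]
      exact ENNReal.mul_ne_top (hcne ζ) (measure_ne_top _ _))]
    refine Finset.sum_congr rfl fun ζ _ => ?_
    rw [Measure.smul_apply, smul_eq_mul, ENNReal.toReal_mul, hnuE2 z z' ζ]
    congr 1
    split_ifs <;> simp
  rw [hLHS]
  simp_rw [hT, hE, hE2]
  have e1 : (∑ z, (qT z) ^ 2 *
      (σ ^ 2 * (∑ ζ : Fin N → Fin K, (c ζ).toReal *
          (if 0 < (B ζ z).card then 1 / ((B ζ z).card : ℝ) else 0))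
        + R ^ 2 * (∑ ζ : Fin N → Fin K, (c ζ).toReal *
          (if (B ζ z).card = 0 then 1 else 0))))
      = ∑ ζ : Fin N → Fin K, (c ζ).toReal * ∑ z, qT z ^ 2 *
          (σ ^ 2 * (if 0 < (B ζ z).card then 1 / ((B ζ z).card : ℝ) else 0)
            + R ^ 2 * (if (B ζ z).card = 0 then 1 else 0)) := by
    calc ∑ z, (qT z) ^ 2 *
        (σ ^ 2 * (∑ ζ : Fin N → Fin K, (c ζ).toReal *
            (if 0 < (B ζ z).card then 1 / ((B ζ z).card : ℝ) else 0))
          + R ^ 2 * (∑ ζ : Fin N → Fin K, (c ζ).toReal *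
            (if (B ζ z).card = 0 then 1 else 0)))
        = ∑ z, ∑ ζ : Fin N → Fin K, (c ζ).toReal * (qT z ^ 2 *
            (σ ^ 2 * (if 0 < (B ζ z).card then 1 / ((B ζ z).card : ℝ) else 0)
              + R ^ 2 * (if (B ζ z).card = 0 then 1 else 0))) := by
          refine Finset.sum_congr rfl fun z _ => ?_
          rw [Finset.mul_sum, Finset.mul_sum, ← Finset.sum_add_distrib, Finset.mul_sum]
          refine Finset.sum_congr rfl fun ζ _ => by ring
      _ = ∑ ζ : Fin N → Fin K, ∑ z, (c ζ).toReal * (qT z ^ 2 *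
            (σ ^ 2 * (if 0 < (B ζ z).card then 1 / ((B ζ z).card : ℝ) else 0)
              + R ^ 2 * (if (B ζ z).card = 0 then 1 else 0))) := Finset.sum_comm
      _ = _ := by
          refine Finset.sum_congr rfl fun ζ _ => ?_
          rw [Finset.mul_sum]
  have e2 : (∑ zz ∈ Finset.univ.offDiag,
      qT zz.1 * qT zz.2 * R ^ 2 *
        (∑ ζ : Fin N → Fin K, (c ζ).toReal *
          (if (B ζ zz.1).card = 0 ∧ (B ζ zz.2).card = 0 then 1 else 0)))
      = ∑ ζ : Fin N → Fin K, (c ζ).toReal *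
          ∑ zz ∈ Finset.univ.offDiag, qT zz.1 * qT zz.2 * R ^ 2 *
            (if (B ζ zz.1).card = 0 ∧ (B ζ zz.2).card = 0 then 1 else 0) := by
    calc ∑ zz ∈ Finset.univ.offDiag,
        qT zz.1 * qT zz.2 * R ^ 2 *
          (∑ ζ : Fin N → Fin K, (c ζ).toReal *
            (if (B ζ zz.1).card = 0 ∧ (B ζ zz.2).card = 0 then 1 else 0))
        = ∑ zz ∈ Finset.univ.offDiag, ∑ ζ : Fin N → Fin K,
            (c ζ).toReal * (qT zz.1 * qT zz.2 * R ^ 2 *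
              (if (B ζ zz.1).card = 0 ∧ (B ζ zz.2).card = 0 then 1 else 0)) := by
          refine Finset.sum_congr rfl fun zz _ => ?_
          rw [Finset.mul_sum]
          refine Finset.sum_congr rfl fun ζ _ => by ring
      _ = ∑ ζ : Fin N → Fin K, ∑ zz ∈ Finset.univ.offDiag,
            (c ζ).toReal * (qT zz.1 * qT zz.2 * R ^ 2 *
              (if (B ζ zz.1).card = 0 ∧ (B ζ zz.2).card = 0 then 1 else 0)) :=
          Finset.sum_comm
      _ = _ := by
          refine Finset.sum_congr rfl fun ζ _ => ?_
          rw [Finset.mul_sum]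
  rw [e1, e2, ← Finset.sum_add_distrib]
  simp_rw [← mul_add]
  exact Finset.sum_le_sum fun ζ _ => mul_le_mul_of_nonneg_left
    (perZeta_bound κ ζ σ R qT hqT.1 h1 h2 hR hμR hV) (hWnn ζ)
end

section
/- (Risk bound for the vector of observed group-conditional means.) Consider the multi-source sampling model with a Markov kernel κ satisfying |μ_z| ≤ R and ∫ (y − μ_z)² d(κ z) ≤ σ² for every z ∈ Fin K, and a sampling plan n with total size N = ∑_m n_m ≥ 1. Then the vector estimator (Ȳ_z)_{z ∈ Fin K} satisfies E_D[ ∑_z (Ȳ_z − μ_z)² ] ≤ ∑_z ( σ²·E[1{n_z > 0}/n_z] + R²·P(n_z = 0) ). -/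
open MeasureTheory ProbabilityTheory

/-! ### Auxiliary lemmas -/

lemma measurable_nObs {K N : ℕ} (z : Fin K) :
    Measurable (nObs z : (Fin N → Fin K × ℝ) → ℕ) := by
  have h : (nObs z : (Fin N → Fin K × ℝ) → ℕ)
      = fun D => ∑ i, if (D i).1 = z then 1 else 0 := by
    funext D; rw [nObs, Finset.card_filter]
  rw [h]
  exact Finset.measurable_sum _ fun i _ =>
    Measurable.ite (((measurable_pi_apply i).fst) (measurableSet_singleton z))
      measurable_const measurable_const

lemma groupMean_eq {K N : ℕ} (z : Fin K) :
    (groupMean z : (Fin N → Fin K × ℝ) → ℝ)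
      = fun D => if nObs z D = 0 then 0
        else (∑ i, if (D i).1 = z then (D i).2 else 0) / (nObs z D : ℝ) := by
  funext D
  simp [groupMean, Finset.sum_filter]

lemma measurable_groupMean {K N : ℕ} (z : Fin K) :
    Measurable (groupMean z : (Fin N → Fin K × ℝ) → ℝ) := by
  rw [groupMean_eq]
  refine Measurable.ite ((measurable_nObs z) (measurableSet_singleton 0))
    measurable_const (Measurable.div ?_ ?_)
  · exact Finset.measurable_sum _ fun i _ =>
      Measurable.ite (((measurable_pi_apply i).fst) (measurableSet_singleton z))
        ((measurable_pi_apply i).snd) measurable_const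
  · exact (Measurable.of_discrete (f := fun n : ℕ => (n : ℝ))).comp (measurable_nObs z)

/-- The conditional law of the dataset given the vector of group labels `v`. -/
noncomputable def Pv' {K N : ℕ} (κ : Kernel (Fin K) ℝ) (v : Fin N → Fin K) :
    Measure (Fin N → Fin K × ℝ) :=
  Measure.pi fun i => (κ (v i)).map fun y => (v i, y)

/-- The probability weight of the label vector `v`. -/
noncomputable def cV {K M N : ℕ} (qsrc : Fin M → Fin K → ℝ) (src : Fin N → Fin M)
    (v : Fin N → Fin K) : ENNReal :=
  ∏ i, ENNReal.ofReal (qsrc (src i) (v i))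

lemma cV_ne_top {K M N : ℕ} (qsrc : Fin M → Fin K → ℝ) (src : Fin N → Fin M)
    (v : Fin N → Fin K) : cV qsrc src v ≠ ⊤ :=
  (ENNReal.prod_lt_top fun _ _ => ENNReal.ofReal_lt_top).ne

lemma discMeasure_bind {K : ℕ} (w : Fin K → ℝ) (κ : Kernel (Fin K) ℝ) :
    (discMeasure w).bind (fun z => (κ z).map fun y => (z, y))
      = ∑ z, ENNReal.ofReal (w z) • ((κ z).map fun y => (z, y)) := by
  ext s hs
  rw [Measure.bind_apply hs Measurable.of_discrete.aemeasurable, discMeasure,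
    lintegral_finset_sum_measure]
  simp [lintegral_smul_measure, lintegral_dirac, Measure.finset_sum_apply, Measure.smul_apply,
    smul_eq_mul]

lemma jointLaw_eq_sum {K M N : ℕ} (qsrc : Fin M → Fin K → ℝ)
    (hq : ∀ m, (∀ z, 0 ≤ qsrc m z) ∧ ∑ z, qsrc m z = 1)
    (κ : Kernel (Fin K) ℝ) [IsMarkovKernel κ] (src : Fin N → Fin M) :
    jointLaw qsrc κ src = ∑ v : Fin N → Fin K, cV qsrc src v • Pv' κ v := by
  haveI hPM : ∀ z : Fin K, IsProbabilityMeasure ((κ z).map fun y => (z, y)) := fun z =>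
    Measure.isProbabilityMeasure_map (measurable_const.prodMk measurable_id).aemeasurable
  have hfac : ∀ i : Fin N, (discMeasure (qsrc (src i))).bind
      (fun z => (κ z).map fun y => (z, y))
      = ∑ z, ENNReal.ofReal (qsrc (src i) z) • ((κ z).map fun y => (z, y)) := fun i =>
    discMeasure_bind _ κ
  haveI hfacP : ∀ i : Fin N, IsProbabilityMeasure ((discMeasure (qsrc (src i))).bind
      fun z => (κ z).map fun y => (z, y)) := by
    intro i
    constructor
    rw [hfac i, Measure.finset_sum_apply]
    simp only [Measure.smul_apply, measure_univ, smul_eq_mul, mul_one]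
    rw [← ENNReal.ofReal_sum_of_nonneg fun z _ => (hq (src i)).1 z, (hq (src i)).2,
      ENNReal.ofReal_one]
  rw [jointLaw]
  refine Measure.pi_eq fun s hs => ?_
  rw [Measure.finset_sum_apply]
  have h1 : ∀ v : Fin N → Fin K, (cV qsrc src v • Pv' κ v) (Set.pi Set.univ s)
      = ∏ i, (ENNReal.ofReal (qsrc (src i) (v i)) * ((κ (v i)).map fun y => (v i, y)) (s i)) := by
    intro v
    rw [Measure.smul_apply, smul_eq_mul, Pv', Measure.pi_pi, cV, ← Finset.prod_mul_distrib]
  simp_rw [h1]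
  have h2 : ∀ i : Fin N, ((discMeasure (qsrc (src i))).bind
      fun z => Measure.map (fun y => (z, y)) (κ z)) (s i)
      = ∑ z, ENNReal.ofReal (qsrc (src i) z) * (Measure.map (fun y => (z, y)) (κ z)) (s i) := by
    intro i
    rw [hfac i, Measure.finset_sum_apply]
    simp [Measure.smul_apply, smul_eq_mul]
  simp_rw [h2]
  rw [Finset.prod_univ_sum, Fintype.piFinset_univ]

lemma measurable_phi {K N : ℕ} (v : Fin N → Fin K) :
    Measurable fun (Y : Fin N → ℝ) (i : Fin N) => (v i, Y i) :=
  measurable_pi_lambda _ fun i => measurable_const.prodMk (measurable_pi_apply i)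

lemma Pv_eq_map {K N : ℕ} (κ : Kernel (Fin K) ℝ) [IsMarkovKernel κ] (v : Fin N → Fin K) :
    Pv' κ v = (Measure.pi fun i => κ (v i)).map fun (Y : Fin N → ℝ) i => (v i, Y i) := by
  haveI hPM : ∀ z : Fin K, IsProbabilityMeasure ((κ z).map fun y => (z, y)) := fun z =>
    Measure.isProbabilityMeasure_map (measurable_const.prodMk measurable_id).aemeasurable
  rw [Pv']
  refine Measure.pi_eq fun s hs => ?_
  rw [Measure.map_apply (measurable_phi v) (MeasurableSet.univ_pi hs)]
  have hpre : (fun (Y : Fin N → ℝ) i => (v i, Y i)) ⁻¹' Set.pi Set.univ s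
      = Set.pi Set.univ fun i => (fun y => (v i, y)) ⁻¹' s i := by
    ext Y
    simp [Set.mem_pi]
  rw [hpre, Measure.pi_pi]
  exact Finset.prod_congr rfl fun i _ =>
    (Measure.map_apply (measurable_const.prodMk measurable_id) (hs i)).symm

lemma integral_pi_prod {N : ℕ} (μs : Fin N → Measure ℝ) [h : ∀ i, IsProbabilityMeasure (μs i)]
    (f : Fin N → ℝ → ℝ) :
    ∫ x, ∏ i, f i (x i) ∂(Measure.pi μs) = ∏ i, ∫ y, f i y ∂(μs i) :=
  MeasureTheory.integral_fintype_prod_eq_prod (E := fun _ => ℝ) f (μ := μs)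

lemma integrable_pi_prod {N : ℕ} (μs : Fin N → Measure ℝ) [h : ∀ i, IsProbabilityMeasure (μs i)]
    {f : Fin N → ℝ → ℝ} (hf : ∀ i, Integrable (f i) (μs i)) :
    Integrable (fun x : Fin N → ℝ => ∏ i, f i (x i)) (Measure.pi μs) :=
  MeasureTheory.Integrable.fintype_prod_dep (E := fun _ => ℝ) (μ := μs) hf

def hfun {α : Type*} [DecidableEq α] (g : ℝ → ℝ) (i j k : α) : ℝ → ℝ :=
  if k = i then (if i = j then fun y => g y * g y else g)
  else if k = j then g else fun _ => 1

lemma hfun_prod {N : ℕ} (g : ℝ → ℝ) (i j : Fin N) (Y : Fin N → ℝ) :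
    (∏ k, hfun g i j k (Y k)) = g (Y i) * g (Y j) := by
  rcases eq_or_ne i j with rfl | hij
  · have h1 : ∀ k, hfun g i i k (Y k) = if k = i then g (Y k) * g (Y k) else 1 := by
      intro k; by_cases hk : k = i <;> simp [hfun, hk]
    rw [Finset.prod_congr rfl fun k _ => h1 k, Finset.prod_ite_eq' Finset.univ i
      fun k => g (Y k) * g (Y k)]
    simp
  · rw [← Finset.prod_mul_prod_compl {i, j}]
    have h2 : ∏ k ∈ ({i, j} : Finset (Fin N))ᶜ, hfun g i j k (Y k) = 1 := by
      refine Finset.prod_eq_one fun k hk => ?_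
      simp only [Finset.mem_compl, Finset.mem_insert, Finset.mem_singleton, not_or] at hk
      simp [hfun, hk.1, hk.2]
    rw [h2, mul_one, Finset.prod_pair hij]
    simp [hfun, hij, Ne.symm hij]

lemma filter_phi {K N : ℕ} (z : Fin K) (v : Fin N → Fin K) (Y : Fin N → ℝ) :
    (Finset.univ.filter fun i => (((fun i => (v i, Y i)) : Fin N → Fin K × ℝ) i).1 = z)
      = Finset.univ.filter fun i => v i = z := by
  apply Finset.filter_congr
  intro i _
  simp

lemma nObs_phi {K N : ℕ} (z : Fin K) (v : Fin N → Fin K) (Y : Fin N → ℝ) :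
    nObs z (fun i => (v i, Y i)) = (Finset.univ.filter fun i => v i = z).card := by
  unfold nObs
  rw [filter_phi]

lemma groupMean_phi {K N : ℕ} (z : Fin K) (v : Fin N → Fin K) (Y : Fin N → ℝ) :
    groupMean z (fun i => (v i, Y i))
      = if (Finset.univ.filter fun i => v i = z).card = 0 then 0
        else (∑ i ∈ Finset.univ.filter fun i => v i = z, Y i)
          / ((Finset.univ.filter fun i => v i = z).card : ℝ) := by
  unfold groupMean
  rw [nObs_phi, filter_phi]

section Core

variable {K N : ℕ} (κ : Kernel (Fin K) ℝ) [IsMarkovKernel κ] (z : Fin K) (v : Fin N → Fin K)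

lemma perV_core (hmi : Integrable (fun y => y) (κ z))
    (hvi : Integrable (fun y => (y - ∫ y', y' ∂(κ z)) ^ 2) (κ z)) (S : Finset (Fin N))
    (hS : ∀ i ∈ S, v i = z) :
    Integrable (fun Y : Fin N → ℝ => (∑ i ∈ S, (Y i - ∫ y, y ∂(κ z))) ^ 2)
      (Measure.pi fun i => κ (v i))
    ∧ ∫ Y, (∑ i ∈ S, (Y i - ∫ y, y ∂(κ z))) ^ 2 ∂(Measure.pi fun i => κ (v i))
      = S.card * ∫ y, (y - ∫ y', y' ∂(κ z)) ^ 2 ∂(κ z) := by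
  set μ0 := ∫ y, y ∂(κ z) with hμ0
  set g : ℝ → ℝ := fun y => y - μ0 with hg
  have hgg : (fun y => g y * g y) = fun y => (y - μ0) ^ 2 := by
    funext y; rw [hg, pow_two]
  have hVeq : ∫ y, g y * g y ∂(κ z) = ∫ y, (y - μ0) ^ 2 ∂(κ z) := by rw [hgg]
  set V := ∫ y, g y * g y ∂(κ z) with hV
  have hgint : Integrable g (κ z) := hmi.sub (integrable_const μ0)
  have hggint : Integrable (fun y => g y * g y) (κ z) := by rw [hgg]; exact hvi
  have hg0 : ∫ y, g y ∂(κ z) = 0 := by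
    rw [hg, integral_sub hmi (integrable_const μ0), integral_const, probReal_univ,
      one_smul, sub_self]
  have hint : ∀ i ∈ S, ∀ j ∈ S, ∀ k, Integrable (hfun g i j k) (κ (v k)) := by
    intro i hi j hj k
    by_cases hki : k = i
    · by_cases hij : i = j
      · have he : hfun g i j k = fun y => g y * g y := by unfold hfun; rw [if_pos hki, if_pos hij]
        rw [he, hki, hS i hi]; exact hggint
      · have he : hfun g i j k = g := by unfold hfun; rw [if_pos hki, if_neg hij]
        rw [he, hki, hS i hi]; exact hgint
    · by_cases hkj : k = j
      · have he : hfun g i j k = g := by unfold hfun; rw [if_neg hki, if_pos hkj]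
        rw [he, hkj, hS j hj]; exact hgint
      · have he : hfun g i j k = fun _ => 1 := by unfold hfun; rw [if_neg hki, if_neg hkj]
        rw [he]; exact integrable_const 1
  have htermint : ∀ i ∈ S, ∀ j ∈ S,
      Integrable (fun Y : Fin N → ℝ => g (Y i) * g (Y j)) (Measure.pi fun i => κ (v i)) := by
    intro i hi j hj
    rw [show (fun Y : Fin N → ℝ => g (Y i) * g (Y j))
        = fun Y => ∏ k, hfun g i j k (Y k) from funext fun Y => (hfun_prod g i j Y).symm]
    exact integrable_pi_prod _ (hint i hi j hj)
  have hterm : ∀ i ∈ S, ∀ j ∈ S,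
      ∫ Y, g (Y i) * g (Y j) ∂(Measure.pi fun i => κ (v i)) = if i = j then V else 0 := by
    intro i hi j hj
    rw [show (fun Y : Fin N → ℝ => g (Y i) * g (Y j))
        = fun Y => ∏ k, hfun g i j k (Y k) from funext fun Y => (hfun_prod g i j Y).symm]
    rw [integral_pi_prod]
    have hfac : ∀ k, ∫ y, hfun g i j k y ∂(κ (v k))
        = if k = i then (if i = j then V else 0) else if k = j then 0 else 1 := by
      intro k
      by_cases hki : k = i
      · have hvk : v k = z := by rw [hki]; exact hS i hi
        by_cases hij : i = j
        · have he : hfun g i j k = fun y => g y * g y := by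
            unfold hfun; rw [if_pos hki, if_pos hij]
          rw [he, hvk, if_pos hki, if_pos hij]
        · have he : hfun g i j k = g := by unfold hfun; rw [if_pos hki, if_neg hij]
          rw [he, hvk, if_pos hki, if_neg hij]
          exact hg0
      · by_cases hkj : k = j
        · have hvk : v k = z := by rw [hkj]; exact hS j hj
          have he : hfun g i j k = g := by unfold hfun; rw [if_neg hki, if_pos hkj]
          rw [he, hvk, if_neg hki, if_pos hkj]
          exact hg0
        · have he : hfun g i j k = fun _ => 1 := by unfold hfun; rw [if_neg hki, if_neg hkj]
          rw [he, if_neg hki, if_neg hkj]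
          simp
    rw [Finset.prod_congr rfl fun k _ => hfac k]
    rcases eq_or_ne i j with rfl | hij
    · have h3 : ∀ k : Fin N,
          (if k = i then (if i = i then V else 0) else if k = i then (0:ℝ) else 1)
          = if k = i then V else 1 := by
        intro k; by_cases hk : k = i <;> simp [hk]
      rw [Finset.prod_congr rfl fun k _ => h3 k, Finset.prod_ite_eq' Finset.univ i fun _ => V]
      simp
    · rw [if_neg hij]
      refine Finset.prod_eq_zero (Finset.mem_univ i) ?_
      simp [hij]
  have hfe : (fun Y : Fin N → ℝ => (∑ i ∈ S, (Y i - μ0)) ^ 2)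
      = fun Y => ∑ i ∈ S, ∑ j ∈ S, g (Y i) * g (Y j) := by
    funext Y
    rw [pow_two, Finset.sum_mul_sum]
  constructor
  · rw [hfe]
    exact integrable_finset_sum _ fun i hi => integrable_finset_sum _ fun j hj =>
      htermint i hi j hj
  · rw [hfe, integral_finset_sum _ fun i hi => integrable_finset_sum _ fun j hj =>
      htermint i hi j hj]
    rw [Finset.sum_congr rfl fun i hi => integral_finset_sum _ fun j hj => htermint i hi j hj]
    rw [Finset.sum_congr rfl fun i hi => Finset.sum_congr rfl fun j hj => hterm i hi j hj]
    rw [Finset.sum_congr rfl fun i hi => Finset.sum_ite_eq S i fun _ => V]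
    rw [Finset.sum_congr rfl fun i hi => if_pos hi, Finset.sum_const, nsmul_eq_mul, hVeq]

lemma perV_F (hmi : Integrable (fun y => y) (κ z))
    (hvi : Integrable (fun y => (y - ∫ y', y' ∂(κ z)) ^ 2) (κ z)) :
    Integrable (fun D => (groupMean z D - ∫ y, y ∂(κ z)) ^ 2) (Pv' κ v)
    ∧ ∫ D, (groupMean z D - ∫ y, y ∂(κ z)) ^ 2 ∂(Pv' κ v)
      = if (Finset.univ.filter fun i => v i = z).card = 0 then (∫ y, y ∂(κ z)) ^ 2
        else (∫ y, (y - ∫ y', y' ∂(κ z)) ^ 2 ∂(κ z))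
          / ((Finset.univ.filter fun i => v i = z).card : ℝ) := by
  set μ0 := ∫ y, y ∂(κ z) with hμ0
  set S := Finset.univ.filter fun i => v i = z with hSdef
  have hSmem : ∀ i ∈ S, v i = z := fun i hi => (Finset.mem_filter.mp hi).2
  have hFmeas : Measurable fun D : Fin N → Fin K × ℝ => (groupMean z D - μ0) ^ 2 :=
    ((measurable_groupMean z).sub measurable_const).pow_const 2
  have hcomp : ∀ Y : Fin N → ℝ, (groupMean z (fun i => (v i, Y i)) - μ0) ^ 2
      = if S.card = 0 then μ0 ^ 2
        else (∑ i ∈ S, (Y i - μ0)) ^ 2 * (1 / (S.card : ℝ)) ^ 2 := by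
    intro Y
    rw [groupMean_phi, ← hSdef]
    by_cases hm : S.card = 0
    · rw [if_pos hm, if_pos hm]
      ring
    · have hcard : ((S.card : ℝ)) ≠ 0 := Nat.cast_ne_zero.mpr hm
      rw [if_neg hm, if_neg hm, Finset.sum_sub_distrib, Finset.sum_const, nsmul_eq_mul]
      field_simp
      try ring
  rw [Pv_eq_map]
  constructor
  · refine (integrable_map_measure hFmeas.aestronglyMeasurable
      (measurable_phi v).aemeasurable).mpr ?_
    have hco : ((fun D : Fin N → Fin K × ℝ => (groupMean z D - μ0) ^ 2)
        ∘ fun Y (i : Fin N) => (v i, Y i))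
        = fun Y : Fin N → ℝ => (groupMean z (fun i => (v i, Y i)) - μ0) ^ 2 := rfl
    rw [hco, funext hcomp]
    by_cases hm : S.card = 0
    · simp only [if_pos hm]
      exact integrable_const _
    · simp only [if_neg hm]
      exact ((perV_core κ z v hmi hvi S hSmem).1).mul_const _
  · rw [integral_map (measurable_phi v).aemeasurable hFmeas.aestronglyMeasurable]
    have : (∫ Y : Fin N → ℝ, (groupMean z (fun i => (v i, Y i)) - μ0) ^ 2
        ∂(Measure.pi fun i => κ (v i)))
        = ∫ Y : Fin N → ℝ, (if S.card = 0 then μ0 ^ 2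
          else (∑ i ∈ S, (Y i - μ0)) ^ 2 * (1 / (S.card : ℝ)) ^ 2)
          ∂(Measure.pi fun i => κ (v i)) := by
      exact integral_congr_ae (Filter.Eventually.of_forall fun Y => hcomp Y)
    rw [this]
    by_cases hm : S.card = 0
    · simp only [if_pos hm]
      rw [integral_const, probReal_univ, one_smul]
    · have hcard : ((S.card : ℝ)) ≠ 0 := Nat.cast_ne_zero.mpr hm
      simp only [if_neg hm]
      rw [integral_mul_const, (perV_core κ z v hmi hvi S hSmem).2]
      field_simp
      ring

lemma perV_G :
    Integrable (fun D => if 0 < nObs z D then 1 / (nObs z D : ℝ) else 0) (Pv' κ v)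
    ∧ ∫ D, (if 0 < nObs z D then 1 / (nObs z D : ℝ) else 0) ∂(Pv' κ v)
      = if 0 < (Finset.univ.filter fun i => v i = z).card
        then 1 / ((Finset.univ.filter fun i => v i = z).card : ℝ) else 0 := by
  have hGmeas : Measurable fun D : Fin N → Fin K × ℝ =>
      if 0 < nObs z D then 1 / (nObs z D : ℝ) else 0 :=
    (Measurable.of_discrete (f := fun n : ℕ => if 0 < n then 1 / (n : ℝ) else 0)).comp
      (measurable_nObs z)
  have hcomp : ∀ Y : Fin N → ℝ,
      (if 0 < nObs z (fun i => (v i, Y i)) then 1 / ((nObs z (fun i => (v i, Y i))) : ℝ) else 0)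
      = if 0 < (Finset.univ.filter fun i => v i = z).card
        then 1 / ((Finset.univ.filter fun i => v i = z).card : ℝ) else 0 := by
    intro Y
    rw [nObs_phi]
  rw [Pv_eq_map]
  constructor
  · refine (integrable_map_measure hGmeas.aestronglyMeasurable
      (measurable_phi v).aemeasurable).mpr ?_
    have hco : ((fun D : Fin N → Fin K × ℝ => if 0 < nObs z D then 1 / (nObs z D : ℝ) else 0)
        ∘ fun Y (i : Fin N) => (v i, Y i))
        = fun Y : Fin N → ℝ => if 0 < nObs z (fun i => (v i, Y i))
          then 1 / ((nObs z (fun i => (v i, Y i))) : ℝ) else 0 := rfl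
    rw [hco, funext hcomp]
    exact integrable_const _
  · rw [integral_map (measurable_phi v).aemeasurable hGmeas.aestronglyMeasurable]
    have : (∫ Y : Fin N → ℝ, (if 0 < nObs z (fun i => (v i, Y i))
        then 1 / ((nObs z (fun i => (v i, Y i))) : ℝ) else 0) ∂(Measure.pi fun i => κ (v i)))
        = ∫ _Y : Fin N → ℝ, (if 0 < (Finset.univ.filter fun i => v i = z).card
          then 1 / ((Finset.univ.filter fun i => v i = z).card : ℝ) else 0)
          ∂(Measure.pi fun i => κ (v i)) :=
      integral_congr_ae (Filter.Eventually.of_forall fun Y => hcomp Y)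
    rw [this, integral_const, probReal_univ, one_smul]

lemma perV_set :
    ((Pv' κ v) {D | nObs z D = 0}).toReal
      = if (Finset.univ.filter fun i => v i = z).card = 0 then 1 else 0 := by
  have hset : MeasurableSet {D : Fin N → Fin K × ℝ | nObs z D = 0} :=
    (measurable_nObs z) (measurableSet_singleton 0)
  rw [Pv_eq_map, Measure.map_apply (measurable_phi v) hset]
  have hpre : (fun (Y : Fin N → ℝ) (i : Fin N) => (v i, Y i)) ⁻¹' {D | nObs z D = 0}
      = if (Finset.univ.filter fun i => v i = z).card = 0 then Set.univ else ∅ := by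
    ext Y
    by_cases hm : (Finset.univ.filter fun i => v i = z).card = 0 <;>
      simp [Set.mem_preimage, nObs_phi, hm]
  rw [hpre]
  by_cases hm : (Finset.univ.filter fun i => v i = z).card = 0
  · rw [if_pos hm, if_pos hm, measure_univ, ENNReal.toReal_one]
  · rw [if_neg hm, if_neg hm]
    simp

end Core


/-- Risk bound for the vector of observed group-conditional means
`(Ȳ_z)_z` as an estimator of the vector of conditional means `(μ_z)_z`. -/
theorem group_means_risk_bound
    {K M N : ℕ} (hK : 1 ≤ K) (hM : 1 ≤ M) (σ R : ℝ)
    (qsrc : Fin M → Fin K → ℝ)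
    (hqsrc : ∀ m, (∀ z, 0 ≤ qsrc m z) ∧ ∑ z, qsrc m z = 1)
    (qT : Fin K → ℝ) (hqT : (∀ z, 0 ≤ qT z) ∧ ∑ z, qT z = 1)
    (n : Fin M → ℕ) (hN : N = ∑ m, n m) (hNpos : 1 ≤ N)
    (src : Fin N → Fin M)
    (hsrc : ∀ m, (Finset.univ.filter fun i => src i = m).card = n m)
    (κ : Kernel (Fin K) ℝ) (hκ : IsMarkovKernel κ)
    (hmean_int : ∀ z, Integrable (fun y => y) (κ z))
    (hmean : ∀ z, |∫ y, y ∂(κ z)| ≤ R)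
    (hvar_int : ∀ z, Integrable (fun y => (y - ∫ y', y' ∂(κ z)) ^ 2) (κ z))
    (hvar : ∀ z, ∫ y, (y - ∫ y', y' ∂(κ z)) ^ 2 ∂(κ z) ≤ σ ^ 2) :
    ∫ D, (∑ z, (groupMean z D - ∫ y, y ∂(κ z)) ^ 2) ∂(jointLaw qsrc κ src) ≤
      ∑ z, (σ ^ 2 * (∫ D, (if 0 < nObs z D then 1 / (nObs z D : ℝ) else 0)
            ∂(jointLaw qsrc κ src))
        + R ^ 2 * (jointLaw qsrc κ src {D | nObs z D = 0}).toReal) := by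
  classical
  haveI hPM : ∀ z : Fin K, IsProbabilityMeasure ((κ z).map fun y => (z, y)) := fun z =>
    Measure.isProbabilityMeasure_map (measurable_const.prodMk measurable_id).aemeasurable
  haveI hPvP : ∀ v : Fin N → Fin K, IsProbabilityMeasure (Pv' κ v) := fun v =>
    inferInstanceAs (IsProbabilityMeasure (Measure.pi fun i => (κ (v i)).map fun y => (v i, y)))
  have hJ : jointLaw qsrc κ src = ∑ v : Fin N → Fin K, cV qsrc src v • Pv' κ v :=
    jointLaw_eq_sum qsrc hqsrc κ src
  -- abbreviations
  set m : (Fin N → Fin K) → Fin K → ℕ :=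
    fun v z => (Finset.univ.filter fun i => v i = z).card with hm
  -- integrability of each F_z w.r.t. the joint law
  have hFint : ∀ z : Fin K,
      Integrable (fun D => (groupMean z D - ∫ y, y ∂(κ z)) ^ 2) (jointLaw qsrc κ src) := by
    intro z
    rw [hJ]
    exact integrable_finset_sum_measure.mpr fun v _ =>
      ((perV_F κ z v (hmean_int z) (hvar_int z)).1).smul_measure (cV_ne_top qsrc src v)
  -- LHS: swap sum and integral
  rw [integral_finset_sum Finset.univ fun z _ => hFint z]
  -- per-z decomposition of the LHS integrals
  have hIeq : ∀ z : Fin K,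
      ∫ D, (groupMean z D - ∫ y, y ∂(κ z)) ^ 2 ∂(jointLaw qsrc κ src)
        = ∑ v : Fin N → Fin K, (cV qsrc src v).toReal *
          (if m v z = 0 then (∫ y, y ∂(κ z)) ^ 2
            else (∫ y, (y - ∫ y', y' ∂(κ z)) ^ 2 ∂(κ z)) / (m v z : ℝ)) := by
    intro z
    rw [hJ, integral_finset_sum_measure fun v _ =>
      ((perV_F κ z v (hmean_int z) (hvar_int z)).1).smul_measure (cV_ne_top qsrc src v)]
    refine Finset.sum_congr rfl fun v _ => ?_
    rw [integral_smul_measure, smul_eq_mul, (perV_F κ z v (hmean_int z) (hvar_int z)).2]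
  -- per-z decomposition of the RHS integrals
  have hGeq : ∀ z : Fin K,
      ∫ D, (if 0 < nObs z D then 1 / (nObs z D : ℝ) else 0) ∂(jointLaw qsrc κ src)
        = ∑ v : Fin N → Fin K, (cV qsrc src v).toReal *
          (if 0 < m v z then 1 / (m v z : ℝ) else 0) := by
    intro z
    rw [hJ, integral_finset_sum_measure fun v _ =>
      ((perV_G κ z v).1).smul_measure (cV_ne_top qsrc src v)]
    refine Finset.sum_congr rfl fun v _ => ?_
    rw [integral_smul_measure, smul_eq_mul, (perV_G κ z v).2]
  have hSeq : ∀ z : Fin K,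
      ((jointLaw qsrc κ src) {D | nObs z D = 0}).toReal
        = ∑ v : Fin N → Fin K, (cV qsrc src v).toReal *
          (if m v z = 0 then 1 else 0) := by
    intro z
    rw [hJ, Measure.finset_sum_apply]
    rw [ENNReal.toReal_sum fun v _ => ?_]
    · refine Finset.sum_congr rfl fun v _ => ?_
      rw [Measure.smul_apply, smul_eq_mul, ENNReal.toReal_mul, perV_set κ z v]
    · exact ENNReal.mul_ne_top (cV_ne_top qsrc src v) (measure_ne_top _ _)
  refine Finset.sum_le_sum fun z _ => ?_
  rw [hIeq z, hGeq z, hSeq z, Finset.mul_sum, Finset.mul_sum, ← Finset.sum_add_distrib]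
  refine Finset.sum_le_sum fun v _ => ?_
  have hA : (if m v z = 0 then (∫ y, y ∂(κ z)) ^ 2
        else (∫ y, (y - ∫ y', y' ∂(κ z)) ^ 2 ∂(κ z)) / (m v z : ℝ))
      ≤ σ ^ 2 * (if 0 < m v z then 1 / (m v z : ℝ) else 0)
        + R ^ 2 * (if m v z = 0 then 1 else 0) := by
    by_cases hmz : m v z = 0
    · rw [if_pos hmz, if_neg (by omega), if_pos hmz]
      have h1 : (∫ y, y ∂(κ z)) ^ 2 ≤ R ^ 2 := by
        rw [← sq_abs]
        exact pow_le_pow_left₀ (abs_nonneg _) (hmean z) 2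
      linarith
    · have hmpos : 0 < m v z := Nat.pos_of_ne_zero hmz
      have hcpos : (0 : ℝ) < (m v z : ℝ) := Nat.cast_pos.mpr hmpos
      rw [if_neg hmz, if_pos hmpos, if_neg hmz]
      have h1 : (∫ y, (y - ∫ y', y' ∂(κ z)) ^ 2 ∂(κ z)) / (m v z : ℝ)
          ≤ σ ^ 2 / (m v z : ℝ) := (div_le_div_iff_of_pos_right hcpos).mpr (hvar z)
      have h2 : σ ^ 2 / (m v z : ℝ) = σ ^ 2 * (1 / (m v z : ℝ)) := by ring
      linarith
  calc (cV qsrc src v).toReal *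
        (if m v z = 0 then (∫ y, y ∂(κ z)) ^ 2
          else (∫ y, (y - ∫ y', y' ∂(κ z)) ^ 2 ∂(κ z)) / (m v z : ℝ))
      ≤ (cV qsrc src v).toReal *
        (σ ^ 2 * (if 0 < m v z then 1 / (m v z : ℝ) else 0)
          + R ^ 2 * (if m v z = 0 then 1 else 0)) :=
        mul_le_mul_of_nonneg_left hA ENNReal.toReal_nonneg
    _ = σ ^ 2 * ((cV qsrc src v).toReal * (if 0 < m v z then 1 / (m v z : ℝ) else 0))
          + R ^ 2 * ((cV qsrc src v).toReal * (if m v z = 0 then 1 else 0)) := by ring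
end
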